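/- Let f : [0,∞) → [0,∞) be a non-decreasing function that is left-continuous on (0,∞), continuous at 0, and has only finitely many points of discontinuity. Let x = (x_N)_{N∈ℕ} be a sequence in [0,1). If there exists k ∈ ℕ and infinitely many N ∈ ℕ such that the finite point set x_1,…,x_N has at most k distinct gap lengths, then x does not have f-pair correlations. -/

import Mathlib

open Filter Set Asymptotics

/-- `nid x` is the distance from `x` to the nearest integer. -/
noncomputable def nid (x : ℝ) : ℝ := |x - round x|

/-- `pairCount x s N` is the pair counting function
`R(s,N) = #{(i,j) : 1 ≤ i ≠ j ≤ N, ‖x i - x j‖ ≤ s/N}`. -/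
noncomputable def pairCount (x : ℕ → ℝ) (s : ℝ) (N : ℕ) : ℕ :=
  {p : ℕ × ℕ | 1 ≤ p.1 ∧ p.1 ≤ N ∧ 1 ≤ p.2 ∧ p.2 ≤ N ∧ p.1 ≠ p.2 ∧
      nid (x p.1 - x p.2) ≤ s / N}.ncard

/-- The sequence `x` has `f`-pair correlations:
`R(s,N)/N → f s` for every `s ≥ 0`. -/
def HasPairCorr (x : ℕ → ℝ) (f : ℝ → ℝ) : Prop :=
  ∀ s : ℝ, 0 ≤ s →
    Tendsto (fun N : ℕ => (pairCount x s N : ℝ) / N) atTop (nhds (f s))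

/-- Given a (sorted) tuple `y : Fin N → ℝ`, the set of gap lengths: for every `i`
the torus distance between `y i` and its circular successor `y (i+1 mod N)`. -/
noncomputable def gapLengths {N : ℕ} (y : Fin N → ℝ) : Finset ℝ :=
  Finset.image (fun i : Fin N => nid (y (finRotate N i) - y i)) Finset.univ

/-- The point set `x 1, …, x N` has at most `k` distinct gap lengths: after sorting
the points (by a permutation `σ`), the distances (w.r.t. the torus metric) between
circularly consecutive elements take at most `k` distinct values. -/
noncomputable def AtMostGaps (x : ℕ → ℝ) (N k : ℕ) : Prop :=
  ∃ σ : Equiv.Perm (Fin N), Monotone (fun i : Fin N => x ((σ i : ℕ) + 1)) ∧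
    (gapLengths (fun i : Fin N => x ((σ i : ℕ) + 1))).card ≤ k

/-! ### auxiliary lemmas about `nid` -/

lemma nid_nonneg (t : ℝ) : 0 ≤ nid t := abs_nonneg _

lemma nid_le_abs_sub (t : ℝ) (z : ℤ) : nid t ≤ |t - z| := round_le t z

lemma nid_le_abs (t : ℝ) : nid t ≤ |t| := by simpa using nid_le_abs_sub t 0

lemma nid_zero : nid 0 = 0 := by simp [nid]

lemma nid_pos {t : ℝ} (h0 : 0 < t) (h1 : t < 1) : 0 < nid t := by
  unfold nid
  rcases le_or_gt ((round t : ℤ) : ℝ) 0 with h | h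
  · rw [abs_of_pos (by linarith)]; linarith
  · have h2 : (1 : ℤ) ≤ round t := by exact_mod_cast Int.cast_pos.mp h
    have h2' : (1 : ℝ) ≤ ((round t : ℤ) : ℝ) := by exact_mod_cast h2
    rw [abs_of_neg (by linarith)]; linarith

lemma nid_wrap {t : ℝ} (h0 : -1 < t) (h1 : t ≤ 0) : nid t ≤ 1 + t := by
  have h := nid_le_abs_sub t (-1)
  have : |t - ((-1 : ℤ) : ℝ)| = 1 + t := by
    rw [abs_of_nonneg (by push_cast; linarith)]; push_cast; ring
  linarith [this ▸ h]

/-! ### `pairCount` as a `Finset` card -/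

noncomputable def pairFinset (x : ℕ → ℝ) (s : ℝ) (N : ℕ) : Finset (ℕ × ℕ) :=
  @Finset.filter _ (fun p => p.1 ≠ p.2 ∧ nid (x p.1 - x p.2) ≤ s / N)
    (Classical.decPred _) (Finset.Icc 1 N ×ˢ Finset.Icc 1 N)

lemma mem_pairFinset {x : ℕ → ℝ} {s : ℝ} {N : ℕ} {p : ℕ × ℕ} :
    p ∈ pairFinset x s N ↔ (1 ≤ p.1 ∧ p.1 ≤ N) ∧ (1 ≤ p.2 ∧ p.2 ≤ N) ∧
      p.1 ≠ p.2 ∧ nid (x p.1 - x p.2) ≤ s / N := by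
  unfold pairFinset
  rw [@Finset.mem_filter _ _ (Classical.decPred _), Finset.mem_product, Finset.mem_Icc,
    Finset.mem_Icc]
  tauto

lemma pairCount_eq_card (x : ℕ → ℝ) (s : ℝ) (N : ℕ) :
    pairCount x s N = (pairFinset x s N).card := by
  rw [← Set.ncard_coe_finset]
  unfold pairCount
  congr 1
  ext p
  rw [Finset.mem_coe, mem_pairFinset]
  simp only [Set.mem_setOf_eq]
  tauto

lemma pairFinset_mono (x : ℕ → ℝ) {a b : ℝ} (N : ℕ) (hab : a ≤ b) :
    pairFinset x a N ⊆ pairFinset x b N := by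
  intro p hp
  rw [mem_pairFinset] at hp ⊢
  refine ⟨hp.1, hp.2.1, hp.2.2.1, le_trans hp.2.2.2 ?_⟩
  rcases Nat.eq_zero_or_pos N with h | h
  · simp [h]
  · have hN : (0:ℝ) < N := by exact_mod_cast h
    exact (div_le_div_iff_of_pos_right hN).mpr hab

lemma telescope (n : ℕ) (y : Fin (n+1) → ℝ) :
    ∑ j : Fin n, (y j.succ - y j.castSucc) = y (Fin.last n) - y 0 := by
  induction n with
  | zero => simp
  | succ n ih =>
    rw [Fin.sum_univ_castSucc]
    have h := ih (fun i => y i.castSucc)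
    simp only [Fin.succ_castSucc] at h ⊢
    rw [show ∑ j : Fin n, (y (j.succ.castSucc) - y (j.castSucc.castSucc)) =
        y ((Fin.last n).castSucc) - y ((0 : Fin (n+1)).castSucc) from h]
    rw [Fin.succ_last, Fin.castSucc_zero]
    ring

set_option maxHeartbeats 1000000 in
lemma key (x : ℕ → ℝ) (hx : ∀ n, x n ∈ Set.Ico (0:ℝ) 1) (k N : ℕ)
    (hgapN : AtMostGaps x N k) (C₀ : ℝ)
    (hC₀ : 2 ≤ C₀) (hN2 : 2 * C₀ ≤ (N : ℝ))
    (hR0 : ((pairCount x 0 N : ℕ) : ℝ) ≤ (C₀ - 1) * N) :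
    ∃ L : ℝ, 0 < L ∧ (N : ℝ) * L ≤ 2 * C₀ * k ∧ ∀ M : ℕ, ∀ a b : ℝ, N ≤ M → 0 ≤ a →
      a < (M : ℝ) * L → (M : ℝ) * L ≤ b →
      (pairCount x a M : ℝ) + (N : ℝ) / (2 * C₀ * k) ≤ (pairCount x b M : ℝ) := by
  classical
  obtain ⟨σ, hmono, hcard⟩ := hgapN
  have hN4 : 4 ≤ N := by
    have : (4:ℝ) ≤ (N:ℝ) := by linarith
    exact_mod_cast this
  obtain ⟨n, rfl⟩ : ∃ n, N = n + 1 := ⟨N - 1, by omega⟩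
  have hn3 : 3 ≤ n := by omega
  set y : Fin (n+1) → ℝ := fun i => x ((σ i : ℕ) + 1) with hy
  have hyIco : ∀ i, y i ∈ Set.Ico (0:ℝ) 1 := fun i => hx _
  set g : Fin (n+1) → ℝ := fun i => nid (y (finRotate (n+1) i) - y i) with hg
  have hcard' : (Finset.image g Finset.univ).card ≤ k := hcard
  have hgnn : ∀ i, 0 ≤ g i := fun i => nid_nonneg _
  have hrot_cast : ∀ j : Fin n, finRotate (n+1) j.castSucc = j.succ := by
    intro j
    rw [finRotate_succ_apply]
    ext
    rw [Fin.val_add_one_of_lt (Fin.castSucc_lt_last j)]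
    simp
  have hrot_last : finRotate (n+1) (Fin.last n) = 0 := by
    rw [finRotate_succ_apply, Fin.last_add_one]
  -- the sum of gaps is at most 1
  have hgsum : ∑ i : Fin (n+1), g i ≤ 1 := by
    rw [Fin.sum_univ_castSucc]
    have h1 : ∀ j : Fin n, g j.castSucc ≤ y j.succ - y j.castSucc := by
      intro j
      have he : g j.castSucc = nid (y j.succ - y j.castSucc) := by
        rw [hg]; simp only []; rw [hrot_cast]
      have hm : y j.castSucc ≤ y j.succ := hmono (Fin.castSucc_lt_succ : j.castSucc < j.succ).le
      rw [he]
      calc nid (y j.succ - y j.castSucc) ≤ |y j.succ - y j.castSucc| := nid_le_abs _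
        _ = y j.succ - y j.castSucc := abs_of_nonneg (by linarith)
    have h2 : g (Fin.last n) ≤ 1 + (y 0 - y (Fin.last n)) := by
      have he : g (Fin.last n) = nid (y 0 - y (Fin.last n)) := by
        rw [hg]; simp only []; rw [hrot_last]
      rw [he]
      apply nid_wrap
      · have := (hyIco 0).1; have := (hyIco (Fin.last n)).2; linarith
      · have : y 0 ≤ y (Fin.last n) := hmono (Fin.zero_le _)
        linarith
    calc ∑ j : Fin n, g j.castSucc + g (Fin.last n)
        ≤ (∑ j : Fin n, (y j.succ - y j.castSucc)) + (1 + (y 0 - y (Fin.last n))) :=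
          add_le_add (Finset.sum_le_sum (fun j _ => h1 j)) h2
      _ = 1 := by rw [telescope]; ring
  -- values of y
  set V : Finset ℝ := Finset.image y Finset.univ with hV
  set P := V.card with hP
  set c : ℝ → ℕ := fun v => (Finset.univ.filter (fun i => y i = v)).card with hc
  have hcpos : ∀ v ∈ V, 1 ≤ c v := by
    intro v hv
    obtain ⟨i₀, -, hi₀⟩ := Finset.mem_image.mp hv
    exact Finset.card_pos.mpr ⟨i₀, Finset.mem_filter.mpr ⟨Finset.mem_univ _, hi₀⟩⟩
  have hsumc : ∑ v ∈ V, c v = n + 1 := by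
    have h := Finset.card_eq_sum_card_image y (Finset.univ : Finset (Fin (n+1)))
    simpa using h.symm
  -- pairs of equal points
  set EP : Finset (Fin (n+1) × Fin (n+1)) :=
    (Finset.univ ×ˢ Finset.univ).filter (fun q => y q.1 = y q.2 ∧ q.1 ≠ q.2) with hEP
  have hEPfib : ∀ v ∈ V, EP.filter (fun q => y q.1 = v)
      = (Finset.univ.filter (fun i => y i = v)).offDiag := by
    intro v _
    ext q
    simp only [hEP, Finset.mem_filter, Finset.mem_product, Finset.mem_univ, true_and,
      Finset.mem_offDiag]
    constructor
    · rintro ⟨⟨h1, h2⟩, h3⟩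
      exact ⟨h3, by rw [← h1]; exact h3, h2⟩
    · rintro ⟨h1, h2, h3⟩
      exact ⟨⟨h1.trans h2.symm, h3⟩, h1⟩
  have hEPsum : (EP.card : ℝ) = ∑ v ∈ V, ((c v : ℝ)^2 - (c v : ℝ)) := by
    have h1 : EP.card = ∑ v ∈ V, (EP.filter (fun q => y q.1 = v)).card := by
      apply Finset.card_eq_sum_card_fiberwise
      intro q hq
      exact Finset.mem_image.mpr ⟨q.1, Finset.mem_univ _, rfl⟩
    rw [h1, Nat.cast_sum]
    apply Finset.sum_congr rfl
    intro v hv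
    rw [hEPfib v hv, Finset.offDiag_card]
    have hle : c v ≤ c v * c v := Nat.le_mul_of_pos_left _ (hcpos v hv)
    rw [Nat.cast_sub hle]
    push_cast
    ring
  -- EP injects into the distance-0 pairs
  have hEPle : (EP.card : ℝ) ≤ (C₀ - 1) * (n+1 : ℕ) := by
    refine le_trans ?_ hR0
    have : EP.card ≤ pairCount x 0 (n+1) := by
      rw [pairCount_eq_card]
      apply Finset.card_le_card_of_injOn (fun q => ((σ q.1 : ℕ) + 1, (σ q.2 : ℕ) + 1))
      · intro q hq
        have hq : q ∈ EP := hq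
        simp only [hEP, Finset.mem_filter, Finset.mem_product] at hq
        obtain ⟨-, hyq, hne⟩ := hq
        rw [Finset.mem_coe, mem_pairFinset]; beta_reduce
        refine ⟨⟨by omega, by have := (σ q.1).isLt; omega⟩,
          ⟨by omega, by have := (σ q.2).isLt; omega⟩, ?_, ?_⟩
        · intro hcontr
          apply hne
          have : σ q.1 = σ q.2 := Fin.ext (by omega)
          exact σ.injective this
        · have hxy : x ((σ q.1 : ℕ) + 1) - x ((σ q.2 : ℕ) + 1) = y q.1 - y q.2 := rfl
          rw [hxy, hyq, sub_self, nid_zero, zero_div]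
      · intro q hq q' hq' hpq
        simp only [Prod.mk.injEq] at hpq
        have h1 : σ q.1 = σ q'.1 := Fin.ext (by omega)
        have h2 : σ q.2 = σ q'.2 := Fin.ext (by omega)
        exact Prod.ext (σ.injective h1) (σ.injective h2)
    exact_mod_cast this
  -- Cauchy–Schwarz : N ≤ C₀ * P
  have hNpos : (0:ℝ) < ((n+1 : ℕ) : ℝ) := by positivity
  have hCS : ((n+1 : ℕ) : ℝ) ≤ C₀ * P := by
    have h1 : ((n+1 : ℕ) : ℝ) = ∑ v ∈ V, (c v : ℝ) := by
      rw [← Nat.cast_sum, hsumc]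
    have h2 := Finset.sum_mul_sq_le_sq_mul_sq V (fun _ => (1:ℝ)) (fun v => (c v : ℝ))
    simp only [one_pow, one_mul, Finset.sum_const, nsmul_eq_mul, mul_one] at h2
    have h3 : ∑ v ∈ V, (c v : ℝ)^2 ≤ C₀ * ((n+1 : ℕ) : ℝ) := by
      have h4 : ∑ v ∈ V, ((c v : ℝ)^2 - (c v : ℝ)) = (∑ v ∈ V, (c v : ℝ)^2) - ∑ v ∈ V, (c v : ℝ) :=
        Finset.sum_sub_distrib _ _
      have h5 := hEPsum ▸ hEPle
      rw [h4] at h5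
      have h6 : ∑ v ∈ V, (c v : ℝ) = ((n+1 : ℕ) : ℝ) := h1.symm
      nlinarith
    -- (N)^2 ≤ P * Σ c² ≤ P * C₀ * N
    have h7 : ((n+1 : ℕ) : ℝ)^2 ≤ (P : ℝ) * (C₀ * ((n+1:ℕ) : ℝ)) := by
      calc ((n+1 : ℕ) : ℝ)^2 = (∑ v ∈ V, (c v : ℝ))^2 := by rw [h1]
        _ ≤ (P : ℝ) * ∑ v ∈ V, (c v : ℝ)^2 := by
            have := h2; nlinarith [this]
        _ ≤ (P : ℝ) * (C₀ * ((n+1:ℕ) : ℝ)) := by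
            apply mul_le_mul_of_nonneg_left h3 (Nat.cast_nonneg _)
    nlinarith
  -- positive gaps
  set posSet := Finset.univ.filter (fun i => g i ≠ 0) with hposSet
  set Q := posSet.card with hQ
  have hPQ : P ≤ Q + 1 := by
    have hsub : V ⊆ Finset.image y posSet ∪ {y (Fin.last n)} := by
      intro v hv
      rcases eq_or_ne v (y (Fin.last n)) with rfl | hne
      · exact Finset.mem_union_right _ (Finset.mem_singleton_self _)
      obtain ⟨i₀, -, hi₀⟩ := Finset.mem_image.mp hv
      have hfib : (Finset.univ.filter (fun i => y i = v)).Nonempty :=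
        ⟨i₀, Finset.mem_filter.mpr ⟨Finset.mem_univ _, hi₀⟩⟩
      set i := (Finset.univ.filter (fun i => y i = v)).max' hfib with hidef
      have hiy : y i = v := (Finset.mem_filter.mp (Finset.max'_mem _ hfib)).2
      have hil : i ≠ Fin.last n := fun hl => hne (by rw [← hiy, hl])
      obtain ⟨j, hj⟩ := Fin.exists_castSucc_eq.mpr hil
      have hnext : y j.succ ≠ v := by
        intro hyv
        have hmem : j.succ ∈ Finset.univ.filter (fun i => y i = v) :=
          Finset.mem_filter.mpr ⟨Finset.mem_univ _, hyv⟩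
        have hle := Finset.le_max' _ _ hmem
        rw [← hidef] at hle
        rw [← hj] at hle
        exact absurd hle (not_le.mpr (Fin.castSucc_lt_succ : j.castSucc < j.succ))
      apply Finset.mem_union_left
      refine Finset.mem_image.mpr ⟨i, ?_, hiy⟩
      refine Finset.mem_filter.mpr ⟨Finset.mem_univ _, ?_⟩
      rw [← hj]
      have hyj : y j.castSucc = v := by rw [hj, hiy]
      have hlt : y j.castSucc < y j.succ := by
        have hle : y j.castSucc ≤ y j.succ := hmono (Fin.castSucc_lt_succ : j.castSucc < j.succ).le
        rcases lt_or_eq_of_le hle with h | h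
        · exact h
        · exact absurd (by rw [← h, hyj]) hnext
      have he : g j.castSucc = nid (y j.succ - y j.castSucc) := by
        rw [hg]; simp only []; rw [hrot_cast]
      rw [he]
      have hd1 : y j.succ - y j.castSucc < 1 := by
        have := (hyIco j.succ).2; have := (hyIco j.castSucc).1; linarith
      exact ne_of_gt (nid_pos (by linarith) hd1)
    calc P ≤ (Finset.image y posSet ∪ {y (Fin.last n)}).card := Finset.card_le_card hsub
      _ ≤ (Finset.image y posSet).card + 1 := by
          simpa using Finset.card_union_le (Finset.image y posSet) {y (Fin.last n)}
      _ ≤ Q + 1 := Nat.add_le_add_right Finset.card_image_le 1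
  -- pigeonhole : heaviest positive gap value
  set img := posSet.image g with himg
  have himgk : img.card ≤ k := by
    refine le_trans (Finset.card_le_card ?_) hcard'
    exact Finset.image_subset_image (Finset.filter_subset _ _)
  have hC₀pos : (0:ℝ) < C₀ := by linarith
  have hP2 : 2 ≤ P := by
    have : (2:ℝ) ≤ (P:ℝ) := by nlinarith
    exact_mod_cast this
  have hQ1 : 1 ≤ Q := by omega
  have hposne : posSet.Nonempty := Finset.card_pos.mp (by omega)
  have himgne : img.Nonempty := hposne.image g
  obtain ⟨L, hLmem, hLmax⟩ := Finset.exists_max_image img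
    (fun v => (posSet.filter (fun i => g i = v)).card) himgne
  set F := posSet.filter (fun i => g i = L) with hF
  set m := F.card with hm
  have hQsum : Q = ∑ v ∈ img, (posSet.filter (fun i => g i = v)).card :=
    Finset.card_eq_sum_card_image g posSet
  have hQkm : Q ≤ k * m := by
    calc Q = ∑ v ∈ img, (posSet.filter (fun i => g i = v)).card := hQsum
      _ ≤ img.card • m := Finset.sum_le_card_nsmul _ _ _ (fun v hv => hLmax v hv)
      _ = img.card * m := by rw [smul_eq_mul]
      _ ≤ k * m := Nat.mul_le_mul_right _ himgk
  have hk1 : 1 ≤ k := le_trans (Finset.card_pos.mpr himgne) himgk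
  have hkr : (1:ℝ) ≤ (k:ℝ) := by exact_mod_cast hk1
  have hL0 : 0 < L := by
    obtain ⟨i, hi, hgi⟩ := Finset.mem_image.mp hLmem
    have : g i ≠ 0 := (Finset.mem_filter.mp hi).2
    have := hgnn i
    rw [← hgi]
    cases' lt_or_eq_of_le (hgnn i) with h h
    · exact h
    · exact absurd h.symm (Finset.mem_filter.mp hi).2
  have hmL : (m:ℝ) * L ≤ 1 := by
    have h1 : ∑ i ∈ F, g i = (m:ℝ) * L := by
      rw [Finset.sum_congr rfl (fun i hi => (Finset.mem_filter.mp hi).2), Finset.sum_const,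
        nsmul_eq_mul]
    have h2 : ∑ i ∈ F, g i ≤ ∑ i : Fin (n+1), g i :=
      Finset.sum_le_sum_of_subset_of_nonneg (Finset.subset_univ _) (fun i _ _ => hgnn i)
    linarith
  -- numeric bounds
  have hCrpos : (0:ℝ) < 2 * C₀ * k := by positivity
  have hQr : ((n+1:ℕ):ℝ) / (2 * C₀) ≤ (Q:ℝ) := by
    have hPQr : (P:ℝ) ≤ (Q:ℝ) + 1 := by exact_mod_cast hPQ
    have h1 : ((n+1:ℕ):ℝ) ≤ C₀ * ((Q:ℝ) + 1) :=
      le_trans hCS (mul_le_mul_of_nonneg_left hPQr hC₀pos.le)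
    rw [div_le_iff₀ (by linarith)]
    nlinarith
  have hmr : ((n+1:ℕ):ℝ) / (2 * C₀ * k) ≤ (m:ℝ) := by
    have hQkr : (Q:ℝ) ≤ (k:ℝ) * m := by exact_mod_cast hQkm
    rw [div_le_iff₀ hCrpos]
    have h1 : ((n+1:ℕ):ℝ) ≤ 2 * C₀ * (Q:ℝ) := by
      rw [div_le_iff₀ (by linarith : (0:ℝ) < 2 * C₀)] at hQr
      linarith
    nlinarith
  have hmpos : (0:ℝ) < m := lt_of_lt_of_le (by positivity) hmr
  refine ⟨L, hL0, ?_, ?_⟩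
  · -- N * L ≤ 2 C₀ k
    have h1 : ((n+1:ℕ):ℝ) ≤ 2 * C₀ * k * m := by
      rw [div_le_iff₀ hCrpos] at hmr
      linarith [hmr]
    nlinarith
  · intro M a b hNM ha haM hbM
    have hMpos : (0:ℝ) < (M:ℝ) := by
      have : 0 < M := by omega
      exact_mod_cast this
    -- the set of pairs at exact distance L
    have hrotne : ∀ i : Fin (n+1), finRotate (n+1) i ≠ i := by
      intro i hcontr
      rw [finRotate_succ_apply] at hcontr
      have h1 : (1 : Fin (n+1)) = 0 := by
        have h2 : i + 1 = i + 0 := by simpa using hcontr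
        exact add_left_cancel h2
      rw [Fin.one_eq_zero_iff] at h1
      omega
    set E := F.image (fun i => ((σ (finRotate (n+1) i) : ℕ) + 1, (σ i : ℕ) + 1)) with hE
    have hEcard : E.card = m := by
      rw [hE]
      apply Finset.card_image_of_injOn
      intro i _ i' _ hpq
      simp only [Prod.mk.injEq] at hpq
      have h2 : σ i = σ i' := Fin.ext (by omega)
      exact σ.injective h2
    have hgF : ∀ i ∈ F, g i = L := fun i hi => (Finset.mem_filter.mp hi).2
    have hEmem : ∀ p ∈ E, p ∈ pairFinset x b M ∧ ¬ nid (x p.1 - x p.2) ≤ a / M := by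
      intro p hp
      obtain ⟨i, hi, rfl⟩ := Finset.mem_image.mp hp
      have hgi : g i = L := hgF i hi
      have hnid : nid (x ((σ (finRotate (n+1) i) : ℕ) + 1) - x ((σ i : ℕ) + 1)) = L := by
        rw [show x ((σ (finRotate (n+1) i) : ℕ) + 1) - x ((σ i : ℕ) + 1)
          = y (finRotate (n+1) i) - y i from rfl]
        exact hgi
      constructor
      · rw [mem_pairFinset]
        refine ⟨⟨by omega, ?_⟩, ⟨by omega, ?_⟩, ?_, ?_⟩
        · have := (σ (finRotate (n+1) i)).isLt; omega
        · have := (σ i).isLt; omega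
        · intro hcontr
          have h2 : σ (finRotate (n+1) i) = σ i := Fin.ext (by simpa using hcontr)
          exact hrotne i (σ.injective h2)
        · rw [hnid]
          rw [le_div_iff₀ hMpos]
          linarith [hbM]
      · rw [hnid]
        intro hcontr
        rw [le_div_iff₀ hMpos] at hcontr
        linarith [haM]
    have hdisj : Disjoint (pairFinset x a M) E := by
      rw [Finset.disjoint_right]
      intro p hpE hpA
      exact (hEmem p hpE).2 (mem_pairFinset.mp hpA).2.2.2
    have hab : a ≤ b := le_trans haM.le hbM
    have hsub2 : pairFinset x a M ∪ E ⊆ pairFinset x b M := by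
      apply Finset.union_subset (pairFinset_mono x M hab)
      exact fun p hp => (hEmem p hp).1
    have hcards : (pairFinset x a M).card + m ≤ (pairFinset x b M).card := by
      rw [← hEcard, ← Finset.card_union_of_disjoint hdisj]
      exact Finset.card_le_card hsub2
    rw [pairCount_eq_card, pairCount_eq_card]
    have : ((pairFinset x a M).card : ℝ) + (m:ℝ) ≤ ((pairFinset x b M).card : ℝ) := by
      exact_mod_cast hcards
    linarith

lemma le_of_frequently_tendsto {u v : ℕ → ℝ} {A B c : ℝ}
    (hu : Tendsto u atTop (nhds A)) (hv : Tendsto v atTop (nhds B))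
    (hfreq : ∃ᶠ M in atTop, u M + c ≤ v M) : A + c ≤ B := by
  by_contra hlt
  push_neg at hlt
  have h1 : Tendsto (fun M => v M - u M) atTop (nhds (B - A)) := hv.sub hu
  have h2 : ∀ᶠ M in atTop, v M - u M < c := h1.eventually_lt_const (by linarith)
  obtain ⟨M, hM1, hM2⟩ := (hfreq.and_eventually h2).exists
  linarith


set_option maxHeartbeats 1000000 in
/-- Let `f : [0,∞) → [0,∞)` be non-decreasing, left-continuous on
`(0,∞)`, continuous at `0` (within the domain), and with only finitely many points of
discontinuity. If the sequence `x` in `[0,1)` is such that for some `k` and infinitely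
many `N` the point set `x 1, …, x N` has at most `k` distinct gap lengths, then `x`
does not have `f`-pair correlations. -/
theorem statement1 (f : ℝ → ℝ) (hf_nonneg : ∀ s : ℝ, 0 ≤ s → 0 ≤ f s)
    (hf_mono : MonotoneOn f (Ici 0))
    (hf_left : ∀ t : ℝ, 0 < t → ContinuousWithinAt f (Iio t) t)
    (hf_zero : ContinuousWithinAt f (Ici 0) 0)
    (hf_fin : {t : ℝ | 0 ≤ t ∧ ¬ ContinuousWithinAt f (Ici 0) t}.Finite)
    (x : ℕ → ℝ) (hx : ∀ n, x n ∈ Ico (0 : ℝ) 1) (k : ℕ)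
    (hgap : {N : ℕ | AtMostGaps x N k}.Infinite) :
    ¬ HasPairCorr x f := by
  intro h
  classical
  set K := max k 1 with hK
  have hK1 : 1 ≤ K := le_max_right _ _
  have hgapK : {N : ℕ | AtMostGaps x N K}.Infinite := by
    apply Set.Infinite.mono ?_ hgap
    intro N hN
    obtain ⟨σ, h1, h2⟩ := hN
    exact ⟨σ, h1, le_trans h2 (le_max_left _ _)⟩
  have hc₀ : 0 ≤ f 0 := hf_nonneg 0 le_rfl
  set C₀ : ℝ := f 0 + 2 with hC₀def
  have hC₀2 : 2 ≤ C₀ := by linarith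
  have hC₀pos : 0 < C₀ := by linarith
  set Cr : ℝ := 2 * C₀ * K with hCrdef
  have hKr : (1:ℝ) ≤ (K:ℝ) := by exact_mod_cast hK1
  have hCrpos : 0 < Cr := by rw [hCrdef]; positivity
  -- eventual bound on R(0,N)
  have h0 : Tendsto (fun N : ℕ => (pairCount x 0 N : ℝ) / N) atTop (nhds (f 0)) := h 0 le_rfl
  have hev : ∀ᶠ N : ℕ in atTop, (pairCount x 0 N : ℝ) ≤ (C₀ - 1) * N := by
    have h1 : ∀ᶠ N : ℕ in atTop, (pairCount x 0 N : ℝ) / N < f 0 + 1 :=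
      h0.eventually_lt_const (by linarith)
    filter_upwards [h1, eventually_ge_atTop 1] with N hN1 hN2
    have hNp : (0:ℝ) < N := by exact_mod_cast hN2
    rw [div_lt_iff₀ hNp] at hN1
    have he : C₀ - 1 = f 0 + 1 := by rw [hC₀def]; ring
    rw [he]
    exact hN1.le
  obtain ⟨N₀, hN₀⟩ := eventually_atTop.mp hev
  set T : ℕ := max (max N₀ 2) (Nat.ceil (2 * C₀)) with hT
  have hsetinf : ({N : ℕ | AtMostGaps x N K} \ Set.Iio T).Infinite :=
    hgapK.diff (Set.finite_Iio T)
  -- a strictly monotone enumeration of good indices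
  have hexists : ∀ a : ℕ, ∃ b, b ∈ ({N : ℕ | AtMostGaps x N K} \ Set.Iio T) ∧ a < b := by
    intro a
    obtain ⟨b, hb, hab⟩ := hsetinf.exists_gt a
    exact ⟨b, hb, hab⟩
  choose nxt hnxt1 hnxt2 using hexists
  set u : ℕ → ℕ := fun j => Nat.rec (nxt 0) (fun _ prev => nxt prev) j with hu
  have humem : ∀ j, u j ∈ ({N : ℕ | AtMostGaps x N K} \ Set.Iio T) := by
    intro j
    cases j with
    | zero => exact hnxt1 0
    | succ j => exact hnxt1 (u j)
  have humono : StrictMono u := strictMono_nat_of_lt_succ (fun j => hnxt2 (u j))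
  have hTle : ∀ j, T ≤ u j := fun j => not_lt.mp (humem j).2
  have hgood : ∀ j, AtMostGaps x (u j) K := fun j => (humem j).1
  have huN₀ : ∀ j, N₀ ≤ u j := fun j => le_trans (le_trans (le_max_left _ _) (le_max_left _ _)) (hTle j)
  have hu2C₀ : ∀ j, 2 * C₀ ≤ ((u j : ℕ) : ℝ) := by
    intro j
    have h1 : Nat.ceil (2 * C₀) ≤ u j := le_trans (le_max_right _ _) (hTle j)
    exact Nat.ceil_le.mp h1
  have hu2 : ∀ j, 2 ≤ u j := fun j =>
    le_trans (le_trans (le_max_right _ _) (le_max_left _ _)) (hTle j)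
  -- per-index data from `key`
  have hKEY : ∀ j, ∃ L : ℝ, 0 < L ∧ ((u j : ℕ) : ℝ) * L ≤ Cr ∧
      ∀ M : ℕ, ∀ a b : ℝ, u j ≤ M → 0 ≤ a → a < (M : ℝ) * L → (M : ℝ) * L ≤ b →
      (pairCount x a M : ℝ) + ((u j : ℕ) : ℝ) / Cr ≤ (pairCount x b M : ℝ) := by
    intro j
    obtain ⟨L, hL1, hL2, hL3⟩ := key x hx K (u j) (hgood j) C₀ hC₀2 (hu2C₀ j) (hN₀ (u j) (huN₀ j))
    exact ⟨L, hL1, hL2, hL3⟩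
  choose L hL0 hLB hLkey using hKEY
  set sq : ℕ → ℝ := fun j => ((u j : ℕ) : ℝ) * L j with hsq
  have hsqmem : ∀ j, sq j ∈ Set.Icc (0:ℝ) Cr := by
    intro j
    exact ⟨mul_nonneg (Nat.cast_nonneg _) (hL0 j).le, hLB j⟩
  obtain ⟨t₁, ht₁, φ, hφ, hconv⟩ := (isCompact_Icc).tendsto_subseq hsqmem
  -- the main jump estimate
  have hmain : ∀ lam : ℕ, 0 < lam → ∀ ε : ℝ, 0 < ε →
      f (max ((lam : ℝ) * t₁ - ε) 0) + 1 / (Cr * lam) ≤ f ((lam : ℝ) * t₁ + ε) := by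
    intro lam hlam ε hε
    have hlamr : (0:ℝ) < (lam : ℝ) := by exact_mod_cast hlam
    set a := max ((lam : ℝ) * t₁ - ε) 0 with hadef
    set b := (lam : ℝ) * t₁ + ε with hbdef
    have ht₁0 : 0 ≤ t₁ := ht₁.1
    have ha0 : 0 ≤ a := le_max_right _ _
    have hb0 : 0 ≤ b := add_nonneg (mul_nonneg hlamr.le ht₁0) hε.le
    have hfreq : ∃ᶠ M : ℕ in atTop,
        (pairCount x a M : ℝ) / M + 1 / (Cr * lam) ≤ (pairCount x b M : ℝ) / M := by
      have hd : (0:ℝ) < ε / (2 * lam) := by positivity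
      have hev2 : ∀ᶠ j in atTop, |sq (φ j) - t₁| < ε / (2 * lam) := by
        have h' := Metric.tendsto_nhds.mp hconv (ε / (2 * lam)) hd
        simpa [Function.comp, Real.dist_eq] using h'
      have hmt : Tendsto (fun j => lam * u (φ j)) atTop atTop := by
        apply tendsto_atTop_mono (fun j => ?_) tendsto_id
        calc (j : ℕ) ≤ φ j := hφ.le_apply
          _ ≤ u (φ j) := humono.le_apply
          _ ≤ lam * u (φ j) := Nat.le_mul_of_pos_left _ hlam
      refine hmt.frequently (Filter.Eventually.frequently ?_)
      filter_upwards [hev2] with j hj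
      set N := u (φ j) with hNdef
      have hN2' : 2 ≤ N := hu2 (φ j)
      have hNr : (0:ℝ) < (N : ℝ) := by
        have : 0 < N := by omega
        exact_mod_cast this
      have hMr : (0:ℝ) < ((lam * N : ℕ) : ℝ) := by
        have : 0 < lam * N := by positivity
        exact_mod_cast this
      have habs := abs_lt.mp hj
      have hsqpos : 0 < sq (φ j) := mul_pos hNr (hL0 (φ j))
      have hcast : ((lam * N : ℕ) : ℝ) * L (φ j) = (lam : ℝ) * sq (φ j) := by
        push_cast
        rw [hsq]
        ring
      have hlam' : (lam : ℝ) * (ε / (2 * lam)) = ε / 2 := by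
        field_simp
      have hup : ((lam * N : ℕ) : ℝ) * L (φ j) ≤ b := by
        rw [hcast, hbdef]
        have h1 : sq (φ j) < t₁ + ε / (2 * lam) := by linarith [habs.2]
        nlinarith
      have hlow : a < ((lam * N : ℕ) : ℝ) * L (φ j) := by
        rw [hcast]
        apply max_lt
        · have h1 : t₁ - ε / (2 * lam) < sq (φ j) := by linarith [habs.1]
          nlinarith
        · positivity
      have key' := hLkey (φ j) (lam * N) a b (Nat.le_mul_of_pos_left _ hlam) ha0 hlow hup
      have hdiv : (pairCount x a (lam * N) : ℝ) / ((lam * N : ℕ) : ℝ)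
          + (((N : ℕ) : ℝ) / Cr) / ((lam * N : ℕ) : ℝ)
          ≤ (pairCount x b (lam * N) : ℝ) / ((lam * N : ℕ) : ℝ) := by
        rw [← add_div]
        exact (div_le_div_iff_of_pos_right hMr).mpr key'
      have hsimp : (((N : ℕ) : ℝ) / Cr) / ((lam * N : ℕ) : ℝ) = 1 / (Cr * lam) := by
        have hCr0 : Cr ≠ 0 := ne_of_gt hCrpos
        have hN0 : (N : ℝ) ≠ 0 := ne_of_gt hNr
        have hl0 : (lam : ℝ) ≠ 0 := ne_of_gt hlamr
        push_cast
        field_simp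
      rw [hsimp] at hdiv
      exact hdiv
    exact le_of_frequently_tendsto (h a ha0) (h b hb0) hfreq
  -- case analysis on t₁
  rcases eq_or_lt_of_le ht₁.1 with ht0 | ht0
  · -- t₁ = 0 : contradicts continuity at 0
    have hcpos : (0:ℝ) < 1 / (Cr * (1 : ℕ)) := by
      have : ((1:ℕ):ℝ) = 1 := by norm_num
      rw [this, mul_one]
      positivity
    have hev3 : ∀ᶠ s in nhdsWithin 0 (Set.Ioi (0:ℝ)), f s < f 0 + 1 / (Cr * (1:ℕ)) := by
      apply Filter.Eventually.filter_mono (nhdsWithin_mono 0 Set.Ioi_subset_Ici_self)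
      exact hf_zero.eventually_lt_const (by linarith)
    obtain ⟨s, hs1, hs2⟩ := (hev3.and eventually_mem_nhdsWithin).exists
    have hs0 : 0 < s := hs2
    have h1 := hmain 1 one_pos s hs0
    rw [← ht0] at h1
    simp only [Nat.cast_one, one_mul, zero_sub, zero_add] at h1
    rw [max_eq_right (by linarith : -s ≤ (0:ℝ))] at h1
    linarith
  · -- t₁ > 0 : infinitely many discontinuities
    apply hf_fin.not_infinite
    apply Set.infinite_of_injective_forall_mem
      (f := fun lam : ℕ => ((lam : ℝ) + 1) * t₁)
    · intro a b hab
      simp only at hab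
      have : ((a : ℝ) + 1) = ((b : ℝ) + 1) := mul_right_cancel₀ (ne_of_gt ht0) hab
      have : (a : ℝ) = (b : ℝ) := by linarith
      exact_mod_cast this
    · intro lam
      refine ⟨by positivity, ?_⟩
      intro hcont
      set tp := ((lam : ℝ) + 1) * t₁ with htp
      have htppos : 0 < tp := by positivity
      have hCA : ContinuousAt f tp := hcont.continuousAt (Ici_mem_nhds htppos)
      set cst := 1 / (Cr * ((lam + 1 : ℕ) : ℝ)) with hcst
      have hlampos : (0:ℝ) < ((lam + 1 : ℕ) : ℝ) := by positivity
      have hcstpos : 0 < cst := by rw [hcst]; positivity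
      obtain ⟨δ, hδ0, hδ⟩ := Metric.continuousAt_iff.mp hCA (cst / 2) (by positivity)
      set ε := min (δ / 2) (tp / 2) with hε
      have hε0 : 0 < ε := lt_min (by linarith) (by linarith)
      have h1 := hmain (lam + 1) (Nat.succ_pos lam) ε hε0
      have hcastl : ((lam + 1 : ℕ) : ℝ) = (lam : ℝ) + 1 := by push_cast; ring
      rw [hcastl] at h1
      have hεtp : ε ≤ tp / 2 := min_le_right _ _
      have hmax : max (((lam : ℝ) + 1) * t₁ - ε) 0 = tp - ε := by
        rw [← htp]
        exact max_eq_left (by linarith)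
      rw [hmax, ← htp] at h1
      -- continuity bounds
      have hεδ : ε < δ := lt_of_le_of_lt (min_le_left _ _) (by linarith)
      have hb1 : |f (tp + ε) - f tp| < cst / 2 := by
        have := hδ (x := tp + ε) (by rw [Real.dist_eq]; rw [abs_of_nonneg (by linarith)]; linarith)
        rwa [Real.dist_eq] at this
      have hb2 : |f (tp - ε) - f tp| < cst / 2 := by
        have := hδ (x := tp - ε) (by rw [Real.dist_eq]; rw [abs_of_nonpos (by linarith)]; linarith)
        rwa [Real.dist_eq] at this
      have hx1 := abs_lt.mp hb1
      have hx2 := abs_lt.mp hb2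
      have hceq : cst = 1 / (Cr * ((lam:ℝ) + 1)) := by rw [hcst, hcastl]
      linarith [hx1.1, hx1.2, hx2.1, hx2.2, hceq, hcstpos]
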